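/- Let F and G be probability distributions on ℝ with finite p-th moment, 1 ≤ p < ∞, with quantile functions F^{-1}(u) = inf{x : F(x) ≥ u} and G^{-1}. Then the Wasserstein-p distance satisfies d_p(F,G) = ( ∫₀¹ |F^{-1}(u) - G^{-1}(u)|^p du )^{1/p}. -/

import Mathlib

open MeasureTheory

/-- The Wasserstein-`p` distance between two measures on `ℝ`, defined as the infimum of
`(∫ |x - y|^p dπ)^{1/p}` over all couplings `π`. -/
noncomputable def wassersteinP (p : ℝ) (μ ν : Measure ℝ) : ℝ :=
  sInf { c | ∃ π : Measure (ℝ × ℝ), π.map Prod.fst = μ ∧ π.map Prod.snd = ν ∧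
    c = (∫ q, |q.1 - q.2| ^ p ∂π) ^ (1 / p) }

/-- The quantile function `F⁻¹(u) = inf {x : u ≤ F(x)}` of a measure on `ℝ`. -/
noncomputable def quantileFn (μ : Measure ℝ) (u : ℝ) : ℝ :=
  sInf { x : ℝ | u ≤ ProbabilityTheory.cdf μ x }

namespace WassAux

open Set ENNReal ProbabilityTheory


open ProbabilityTheory

variable (μ : Measure ℝ) [IsProbabilityMeasure μ]

lemma bddBelow_S {u : ℝ} (hu : 0 < u) : BddBelow { x : ℝ | u ≤ cdf μ x } := by
  obtain ⟨z, hz⟩ : ∃ z, cdf μ z < u := ((tendsto_cdf_atBot μ).eventually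
    (eventually_lt_nhds hu)).exists
  exact ⟨z, fun y hy => by
    by_contra h
    exact absurd (le_trans hy (monotone_cdf μ (le_of_not_ge h))) (not_le.2 hz)⟩

lemma nonempty_S {u : ℝ} (hu : u < 1) : { x : ℝ | u ≤ cdf μ x }.Nonempty := by
  obtain ⟨z, hz⟩ : ∃ z, u ≤ cdf μ z := ((tendsto_cdf_atTop μ).eventually
    (eventually_ge_nhds hu)).exists
  exact ⟨z, hz⟩

lemma quantile_mem {u : ℝ} (hu : u ∈ Ioo (0:ℝ) 1) :
    u ≤ cdf μ (quantileFn μ u) := by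
  by_contra h
  push_neg at h
  set a := quantileFn μ u with ha
  have hrc : ContinuousWithinAt (cdf μ) (Ici a) a := (cdf μ).right_continuous a
  have hev : ∀ᶠ x in nhdsWithin a (Ici a), cdf μ x < u :=
    hrc.eventually_lt continuousWithinAt_const h
  obtain ⟨b, hab, hsub⟩ := (mem_nhdsGE_iff_exists_Ico_subset).1 hev
  rw [Set.mem_Ioi] at hab
  have hb : b ≤ a := by
    apply le_csInf (nonempty_S μ hu.2)
    intro y hy
    by_contra hyb
    push_neg at hyb
    have hya : a ≤ y := csInf_le (bddBelow_S μ hu.1) hy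
    have h2 : cdf μ y < u := hsub ⟨hya, hyb⟩
    rw [Set.mem_setOf_eq] at hy
    linarith
  linarith

lemma quantile_le_iff {u : ℝ} (hu : u ∈ Ioo (0:ℝ) 1) (x : ℝ) :
    quantileFn μ u ≤ x ↔ u ≤ cdf μ x := by
  constructor
  · intro h
    exact le_trans (quantile_mem μ hu) (monotone_cdf μ h)
  · intro h
    exact csInf_le (bddBelow_S μ hu.1) h

/-- measurable clamped version of the quantile function -/
noncomputable def Qc (μ : Measure ℝ) : ℝ → ℝ := (Ioo (0:ℝ) 1).indicator (quantileFn μ)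

lemma Qc_eqOn : ∀ u ∈ Ioo (0:ℝ) 1, Qc μ u = quantileFn μ u := fun u hu =>
  Set.indicator_of_mem hu _

lemma measurable_Qc : Measurable (Qc μ) := by
  apply measurable_of_Iic
  intro x
  have : Qc μ ⁻¹' Iic x =
      (Ioo (0:ℝ) 1 ∩ Iic (cdf μ x)) ∪ ((Ioo (0:ℝ) 1)ᶜ ∩ {u : ℝ | (0:ℝ) ≤ x}) := by
    ext u
    by_cases hu : u ∈ Ioo (0:ℝ) 1
    · simp only [mem_preimage, mem_Iic, Qc, Set.indicator_of_mem hu, mem_union, mem_inter_iff,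
        hu, true_and, mem_compl_iff, not_true, false_and, or_false, mem_Iic]
      exact quantile_le_iff μ hu x
    · simp only [mem_preimage, mem_Iic, Qc, Set.indicator_of_notMem hu, mem_union, mem_inter_iff,
        hu, false_and, false_or, mem_compl_iff, not_false_iff, true_and, mem_setOf_eq]
  rw [this]
  have h2 : MeasurableSet {u : ℝ | (0:ℝ) ≤ x} := by
    by_cases hx : (0:ℝ) ≤ x
    · have : {u : ℝ | (0:ℝ) ≤ x} = univ := by ext; simp [hx]
      rw [this]; exact MeasurableSet.univ
    · have : {u : ℝ | (0:ℝ) ≤ x} = ∅ := by ext; simp [hx]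
      rw [this]; exact MeasurableSet.empty
  exact ((measurableSet_Ioo.inter measurableSet_Iic).union
    (measurableSet_Ioo.compl.inter h2))

lemma preim_Qc (x : ℝ) : Qc μ ⁻¹' Iic x ∩ Ioo (0:ℝ) 1 = Ioo (0:ℝ) 1 ∩ Iic (cdf μ x) := by
  ext u
  simp only [mem_inter_iff, mem_preimage, mem_Iic, and_comm]
  constructor
  · rintro ⟨hu, h⟩
    rw [Qc_eqOn μ u hu] at h
    exact ⟨hu, (quantile_le_iff μ hu x).1 h⟩
  · rintro ⟨hu, h⟩
    exact ⟨hu, by rw [Qc_eqOn μ u hu]; exact (quantile_le_iff μ hu x).2 h⟩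

lemma map_Qc : (volume.restrict (Ioo (0:ℝ) 1)).map (Qc μ) = μ := by
  have hfin : IsFiniteMeasure ((volume.restrict (Ioo (0:ℝ) 1)).map (Qc μ)) := by
    constructor
    rw [Measure.map_apply (measurable_Qc μ) MeasurableSet.univ]
    simp [Real.volume_Ioo]
  refine @Measure.ext_of_Iic ℝ _ _ _ _ _ _ _ _ hfin (fun a => ?_)
  rw [Measure.map_apply (measurable_Qc μ) measurableSet_Iic,
    Measure.restrict_apply ((measurable_Qc μ) measurableSet_Iic), preim_Qc μ a,
    ← ofReal_cdf μ a]
  rcases lt_or_ge (cdf μ a) 1 with hc | hc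
  · have : Ioo (0:ℝ) 1 ∩ Iic (cdf μ a) = Ioc 0 (cdf μ a) := by
      ext u
      simp only [mem_inter_iff, mem_Ioo, mem_Iic, mem_Ioc]
      exact ⟨fun ⟨⟨h1, _⟩, h3⟩ => ⟨h1, h3⟩, fun ⟨h1, h2⟩ => ⟨⟨h1, lt_of_le_of_lt h2 hc⟩, h2⟩⟩
    rw [this, Real.volume_Ioc, sub_zero]
  · have hc1 : cdf μ a = 1 := le_antisymm (cdf_le_one μ a) hc
    have : Ioo (0:ℝ) 1 ∩ Iic (cdf μ a) = Ioo 0 1 := by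
      rw [hc1]
      ext u
      simp only [mem_inter_iff, mem_Ioo, mem_Iic]
      exact ⟨fun h => h.1, fun h => ⟨h, le_of_lt h.2⟩⟩
    rw [this, Real.volume_Ioo, hc1]
    norm_num



/-- the "layer" measure representing `d ↦ d^p` -/
noncomputable def tau (p : ℝ) : Measure ℝ :=
  if p = 1 then Measure.dirac 0
  else (volume.restrict (Ioi (0:ℝ))).withDensity
    (fun q => ENNReal.ofReal (p * (p-1) * q ^ (p-2)))

instance tau_sigmaFinite (p : ℝ) : SigmaFinite (tau p) := by
  rw [tau]
  split_ifs
  · infer_instance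
  · infer_instance

lemma tau_nonneg (p : ℝ) : ∀ᵐ q ∂(tau p), 0 ≤ q := by
  rw [tau]
  split_ifs
  · rw [MeasureTheory.ae_dirac_iff (by exact measurableSet_Ici)]
  · refine (withDensity_absolutelyContinuous _ _).ae_le ?_
    filter_upwards [ae_restrict_mem measurableSet_Ioi] with q hq
    exact le_of_lt hq

lemma tau_repr {p : ℝ} (hp : 1 ≤ p) {d : ℝ} (hd : 0 ≤ d) :
    ENNReal.ofReal (d ^ p) = ∫⁻ q, ENNReal.ofReal (d - q) ∂(tau p) := by
  rcases eq_or_lt_of_le hp with hp1 | hp1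
  · rw [tau, if_pos hp1.symm, lintegral_dirac, ← hp1, Real.rpow_one, sub_zero]
  have hp1' : p ≠ 1 := ne_of_gt hp1
  have hpne : p ≠ 0 := by positivity
  have hpm1 : p - 1 ≠ 0 := by intro h; apply hp1'; linarith
  rw [tau, if_neg hp1']
  rw [lintegral_withDensity_eq_lintegral_mul _ (by fun_prop) (by fun_prop)]
  have hsplit : Ioi (0:ℝ) = Ioc 0 d ∪ Ioi d := (Set.Ioc_union_Ioi_eq_Ioi hd).symm
  rw [show ∫⁻ (a : ℝ), ((fun q => ENNReal.ofReal (p * (p-1) * q ^ (p-2))) *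
      (fun q => ENNReal.ofReal (d - q))) a ∂volume.restrict (Ioi 0)
    = ∫⁻ a in Ioi (0:ℝ), ENNReal.ofReal (p * (p-1) * a ^ (p-2)) * ENNReal.ofReal (d - a)
      ∂volume from rfl]
  rw [hsplit, lintegral_union measurableSet_Ioi Set.Ioc_disjoint_Ioi_same]
  have hzero : ∫⁻ a in Ioi d, ENNReal.ofReal (p * (p-1) * a ^ (p-2)) * ENNReal.ofReal (d - a)
      ∂volume = 0 := by
    rw [setLIntegral_congr_fun_ae (g := fun _ => 0) measurableSet_Ioi
      (ae_of_all _ (fun a (ha : d < a) => by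
        rw [show ENNReal.ofReal (d - a) = 0 from ENNReal.ofReal_of_nonpos (by linarith),
          mul_zero]))]
    simp
  rw [hzero, add_zero]
  have hcong : ∫⁻ a in Ioc (0:ℝ) d, ENNReal.ofReal (p * (p-1) * a ^ (p-2)) *
      ENNReal.ofReal (d - a) ∂volume
      = ∫⁻ a in Ioc (0:ℝ) d, ENNReal.ofReal ((p * (p-1) * a ^ (p-2)) * (d - a)) ∂volume := by
    refine setLIntegral_congr_fun_ae measurableSet_Ioc (ae_of_all _ (fun a ha => ?_))
    have h : (0:ℝ) ≤ p * (p-1) * a ^ (p-2) :=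
      mul_nonneg (mul_nonneg (by linarith) (by linarith)) (Real.rpow_nonneg ha.1.le _)
    exact (ENNReal.ofReal_mul h).symm
  rw [hcong]
  have e1 : IntervalIntegrable (fun a : ℝ => (p * (p-1) * d) * a ^ (p-2))
      volume 0 d := (intervalIntegral.intervalIntegrable_rpow' (by linarith)).const_mul _
  have e2 : IntervalIntegrable (fun a : ℝ => (p * (p-1)) * a ^ (p-1))
      volume 0 d := (intervalIntegral.intervalIntegrable_rpow' (by linarith)).const_mul _
  have heqon : EqOn (fun a : ℝ => (p * (p-1) * d) * a ^ (p-2) - (p * (p-1)) * a ^ (p-1))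
      (fun a : ℝ => (p * (p-1) * a ^ (p-2)) * (d - a)) (Icc 0 d) := by
    intro a ha
    rcases eq_or_lt_of_le ha.1 with h0 | h0
    · simp only [← h0, Real.zero_rpow hpm1]
      ring
    · have : a ^ (p-1) = a ^ (p-2) * a := by
        rw [show p - 1 = (p-2) + 1 by ring, Real.rpow_add_one (ne_of_gt h0)]
      simp only [this]
      ring
  have hint : IntegrableOn (fun a : ℝ => (p * (p-1) * a ^ (p-2)) * (d - a)) (Ioc 0 d) volume := by
    have h1 := (e1.sub e2)
    rw [intervalIntegrable_iff_integrableOn_Ioc_of_le hd] at h1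
    exact h1.congr_fun (heqon.mono Ioc_subset_Icc_self) measurableSet_Ioc
  rw [← MeasureTheory.ofReal_integral_eq_lintegral_ofReal hint ?hnn]
  case hnn =>
    filter_upwards [ae_restrict_mem measurableSet_Ioc] with a ha
    have h1 : (0:ℝ) ≤ a ^ (p-2) := Real.rpow_nonneg (le_of_lt ha.1) _
    have h2 : (0:ℝ) ≤ d - a := by linarith [ha.2]
    have h3 : (0:ℝ) ≤ p * (p-1) := by nlinarith
    exact mul_nonneg (mul_nonneg h3 h1) h2
  congr 1
  rw [← intervalIntegral.integral_of_le hd]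
  have hIcong := intervalIntegral.integral_congr (μ := volume)
    (show EqOn (fun a : ℝ => (p * (p-1) * d) * a ^ (p-2) - (p * (p-1)) * a ^ (p-1))
      (fun a : ℝ => (p * (p-1) * a ^ (p-2)) * (d - a)) (uIcc 0 d) by rwa [uIcc_of_le hd])
  rw [← hIcong]
  rw [intervalIntegral.integral_sub e1 e2, intervalIntegral.integral_const_mul,
    intervalIntegral.integral_const_mul, integral_rpow (Or.inl (by linarith)),
    integral_rpow (Or.inl (by linarith))]
  rw [show p - 2 + 1 = p - 1 by ring, show p - 1 + 1 = p by ring,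
    Real.zero_rpow hpm1, Real.zero_rpow hpne, sub_zero, sub_zero]
  rcases eq_or_lt_of_le hd with hd0 | hd0
  · rw [← hd0, Real.zero_rpow hpne, Real.zero_rpow hpm1]
    ring
  · have e5 : d * d ^ (p-1) = d ^ p := by
      nth_rewrite 1 [← Real.rpow_one d]
      rw [← Real.rpow_add hd0]
      norm_num
    have hA : p * (p-1) / (p-1) = p := by field_simp
    have hB : p * (p-1) / p = p - 1 := by field_simp
    calc d ^ p = d ^ p * p - d ^ p * (p - 1) := by ring
    _ = (d * d ^ (p-1)) * (p * (p-1) / (p-1)) - d ^ p * (p * (p-1) / p) := by rw [hA, hB, e5]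
    _ = p * (p-1) * d * (d ^ (p-1) / (p-1)) - p * (p-1) * (d ^ p / p) := by ring


/-- kernel -/
noncomputable def ker (q t : ℝ) (z : ℝ × ℝ) : ℝ≥0∞ :=
  (if z.2 ≤ t ∧ t ≤ z.1 - q then 1 else 0) + (if z.1 ≤ t ∧ t ≤ z.2 - q then 1 else 0)

lemma ker_meas : Measurable (fun w : (ℝ × ℝ) × ℝ × ℝ => ker w.1.1 w.1.2 w.2) := by
  have hs : ∀ (f g : (ℝ × ℝ) × ℝ × ℝ → ℝ), Measurable f → Measurable g →
      MeasurableSet {w : (ℝ × ℝ) × ℝ × ℝ | f w ≤ g w} := fun f g hf hg =>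
    measurableSet_le hf hg
  apply Measurable.add
  · exact Measurable.ite
      ((hs _ _ (by fun_prop) (by fun_prop)).inter (hs _ _ (by fun_prop) (by fun_prop)))
      measurable_const measurable_const
  · exact Measurable.ite
      ((hs _ _ (by fun_prop) (by fun_prop)).inter (hs _ _ (by fun_prop) (by fun_prop)))
      measurable_const measurable_const

lemma ker_lintegral (q x y : ℝ) :
    ∫⁻ t, ker q t (x, y) = ENNReal.ofReal (x - y - q) + ENNReal.ofReal (y - x - q) := by
  have h1 : ∀ t : ℝ, ker q t (x, y)
      = (Icc y (x - q)).indicator (1 : ℝ → ℝ≥0∞) t + (Icc x (y - q)).indicator (1 : ℝ → ℝ≥0∞) t := by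
    intro t
    simp [ker, Set.indicator_apply, Set.mem_Icc]
  simp_rw [h1]
  rw [lintegral_add_left (measurable_one.indicator measurableSet_Icc),
    lintegral_indicator_one measurableSet_Icc, lintegral_indicator_one measurableSet_Icc,
    Real.volume_Icc, Real.volume_Icc]
  congr 1 <;> congr 1 <;> ring


lemma core3 {p : ℝ} (hp : 1 ≤ p) (z : ℝ × ℝ) :
    ENNReal.ofReal (|z.1 - z.2| ^ p)
      = ∫⁻ r, ker r.1 r.2 z ∂((tau p).prod volume) := by
  have hm : Measurable (fun r : ℝ × ℝ => ker r.1 r.2 z) :=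
    ker_meas.comp (measurable_id.prodMk measurable_const)
  rw [lintegral_prod _ hm.aemeasurable]
  have h2 : ∀ q : ℝ, ∫⁻ t, ker q t z = ENNReal.ofReal (z.1 - z.2 - q)
      + ENNReal.ofReal (z.2 - z.1 - q) := fun q => ker_lintegral q z.1 z.2
  simp_rw [h2]
  rw [tau_repr hp (abs_nonneg (z.1 - z.2))]
  apply lintegral_congr_ae
  filter_upwards [tau_nonneg p] with q hq
  rcases abs_cases (z.1 - z.2) with ⟨h1, h2⟩ | ⟨h1, h2⟩
  · rw [h1, show ENNReal.ofReal (z.2 - z.1 - q) = 0 from ENNReal.ofReal_of_nonpos (by linarith), add_zero]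
  · rw [h1, show ENNReal.ofReal (z.1 - z.2 - q) = 0 from ENNReal.ofReal_of_nonpos (by linarith), zero_add, show -(z.1 - z.2) - q = z.2 - z.1 - q by ring]


noncomputable def LB (μ ν : Measure ℝ) (q t : ℝ) : ℝ≥0∞ :=
  (ENNReal.ofReal (cdf ν t) - ENNReal.ofReal (cdf μ (t + q)))
  + (ENNReal.ofReal (cdf μ t) - ENNReal.ofReal (cdf ν (t + q)))

lemma measurable_LB (μ ν : Measure ℝ) : Measurable (fun r : ℝ × ℝ => LB μ ν r.1 r.2) := by
  unfold LB
  apply Measurable.fun_add <;> apply Measurable.fun_sub <;>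
    exact ENNReal.measurable_ofReal.comp ((monotone_cdf _).measurable.comp (by fun_prop))

lemma ker_set_meas (q t : ℝ) : MeasurableSet {z : ℝ × ℝ | z.2 ≤ t ∧ t ≤ z.1 - q} := by
  have : {z : ℝ × ℝ | z.2 ≤ t ∧ t ≤ z.1 - q}
      = {z : ℝ × ℝ | z.2 ≤ t} ∩ {z : ℝ × ℝ | t ≤ z.1 - q} := rfl
  rw [this]
  exact (measurableSet_le (by fun_prop) (by fun_prop)).inter
    (measurableSet_le (by fun_prop) (by fun_prop))

lemma ker_set_meas' (q t : ℝ) : MeasurableSet {z : ℝ × ℝ | z.1 ≤ t ∧ t ≤ z.2 - q} := by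
  have : {z : ℝ × ℝ | z.1 ≤ t ∧ t ≤ z.2 - q}
      = {z : ℝ × ℝ | z.1 ≤ t} ∩ {z : ℝ × ℝ | t ≤ z.2 - q} := rfl
  rw [this]
  exact (measurableSet_le (by fun_prop) (by fun_prop)).inter
    (measurableSet_le (by fun_prop) (by fun_prop))

lemma ker_lintegral_meas (π : Measure (ℝ × ℝ)) (q t : ℝ) :
    ∫⁻ z, ker q t z ∂π
      = π {z : ℝ × ℝ | z.2 ≤ t ∧ t ≤ z.1 - q} + π {z : ℝ × ℝ | z.1 ≤ t ∧ t ≤ z.2 - q} := by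
  have h1 : ∀ z : ℝ × ℝ, ker q t z
      = {z : ℝ × ℝ | z.2 ≤ t ∧ t ≤ z.1 - q}.indicator (1 : ℝ × ℝ → ℝ≥0∞) z
        + {z : ℝ × ℝ | z.1 ≤ t ∧ t ≤ z.2 - q}.indicator (1 : ℝ × ℝ → ℝ≥0∞) z := by
    intro z
    simp [ker, Set.indicator_apply]
  simp_rw [h1]
  rw [lintegral_add_left (measurable_one.indicator (ker_set_meas q t)),
    lintegral_indicator_one (ker_set_meas q t), lintegral_indicator_one (ker_set_meas' q t)]

variable (μ ν : Measure ℝ) [IsProbabilityMeasure μ] [IsProbabilityMeasure ν]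

lemma marg_bound {π : Measure (ℝ × ℝ)} (hfst : π.map Prod.fst = μ) (hsnd : π.map Prod.snd = ν)
    (q t : ℝ) : LB μ ν q t ≤ ∫⁻ z, ker q t z ∂π := by
  rw [ker_lintegral_meas]
  apply add_le_add
  · rw [tsub_le_iff_right, ofReal_cdf ν t, ofReal_cdf μ (t + q), ← hsnd, ← hfst,
      Measure.map_apply measurable_snd measurableSet_Iic,
      Measure.map_apply measurable_fst measurableSet_Iic]
    refine le_trans (measure_mono ?_) (measure_union_le _ _)
    intro z hz
    simp only [mem_preimage, mem_Iic] at hz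
    by_cases h : t ≤ z.1 - q
    · exact Or.inl ⟨hz, h⟩
    · exact Or.inr (by simp only [mem_preimage, mem_Iic]; push_neg at h; linarith)
  · rw [tsub_le_iff_right, ofReal_cdf μ t, ofReal_cdf ν (t + q), ← hsnd, ← hfst,
      Measure.map_apply measurable_snd measurableSet_Iic,
      Measure.map_apply measurable_fst measurableSet_Iic]
    refine le_trans (measure_mono ?_) (measure_union_le _ _)
    intro z hz
    simp only [mem_preimage, mem_Iic] at hz
    by_cases h : t ≤ z.2 - q
    · exact Or.inl ⟨hz, h⟩
    · exact Or.inr (by simp only [mem_preimage, mem_Iic]; push_neg at h; linarith)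

lemma coupling_prob {π : Measure (ℝ × ℝ)} (hfst : π.map Prod.fst = μ) :
    IsProbabilityMeasure π := by
  constructor
  have := Measure.map_apply (μ := π) measurable_fst MeasurableSet.univ
  simp only [Set.preimage_univ] at this
  rw [← this, hfst, measure_univ]

lemma pi_side {p : ℝ} (hp : 1 ≤ p) {π : Measure (ℝ × ℝ)} (hfst : π.map Prod.fst = μ)
    (hsnd : π.map Prod.snd = ν) :
    ∫⁻ q, (∫⁻ t, LB μ ν q t) ∂(tau p) ≤ ∫⁻ z, ENNReal.ofReal (|z.1 - z.2| ^ p) ∂π := by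
  haveI : IsProbabilityMeasure π := coupling_prob μ hfst
  have hswap : Measurable (fun w : (ℝ × ℝ) × ℝ × ℝ => ker w.2.1 w.2.2 w.1) :=
    ker_meas.comp (measurable_swap)
  calc ∫⁻ q, (∫⁻ t, LB μ ν q t) ∂(tau p)
      = ∫⁻ r, LB μ ν r.1 r.2 ∂((tau p).prod volume) :=
        (lintegral_prod _ (measurable_LB μ ν).aemeasurable).symm
    _ ≤ ∫⁻ r, (∫⁻ z, ker r.1 r.2 z ∂π) ∂((tau p).prod volume) :=
        lintegral_mono (fun r => marg_bound μ ν hfst hsnd r.1 r.2)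
    _ = ∫⁻ z, (∫⁻ r, ker r.1 r.2 z ∂((tau p).prod volume)) ∂π := by
        rw [lintegral_lintegral_swap (f := fun (r : ℝ × ℝ) (z : ℝ × ℝ) => ker r.1 r.2 z)
          ker_meas.aemeasurable]
    _ = ∫⁻ z, ENNReal.ofReal (|z.1 - z.2| ^ p) ∂π := by
        apply lintegral_congr (fun z => (core3 hp z).symm)


lemma one_slice {q : ℝ} (hq : 0 ≤ q) {t : ℝ} (hF : ContinuousAt (cdf μ) (t + q)) :
    volume ({u : ℝ | Qc ν u ≤ t ∧ t ≤ Qc μ u - q} ∩ Ioo 0 1)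
      ≤ ENNReal.ofReal (cdf ν t) - ENNReal.ofReal (cdf μ (t + q)) := by
  refine ENNReal.le_of_forall_pos_le_add (fun ε hε hlt => ?_)
  have hεr : (0:ℝ) < (ε:ℝ) := hε
  have hev : ∀ᶠ x in nhdsWithin (t+q) (Iio (t+q)), cdf μ (t+q) - (ε:ℝ) < cdf μ x :=
    (hF.eventually (eventually_gt_nhds (by linarith))).filter_mono nhdsWithin_le_nhds
  obtain ⟨s', hs', hs'lt⟩ := (hev.and eventually_mem_nhdsWithin).exists
  rw [Set.mem_Iio] at hs'lt
  have hsub : {u : ℝ | Qc ν u ≤ t ∧ t ≤ Qc μ u - q} ∩ Ioo 0 1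
      ⊆ Ioc (cdf μ s') (cdf ν t) := by
    rintro u ⟨⟨hu1, hu2⟩, huI⟩
    rw [Qc_eqOn ν u huI] at hu1
    rw [Qc_eqOn μ u huI] at hu2
    constructor
    · by_contra hc
      push_neg at hc
      have := (quantile_le_iff μ huI s').2 hc
      linarith
    · exact (quantile_le_iff ν huI t).1 hu1
  calc volume ({u : ℝ | Qc ν u ≤ t ∧ t ≤ Qc μ u - q} ∩ Ioo 0 1)
      ≤ volume (Ioc (cdf μ s') (cdf ν t)) := measure_mono hsub
    _ = ENNReal.ofReal (cdf ν t - cdf μ s') := Real.volume_Ioc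
    _ ≤ ENNReal.ofReal ((cdf ν t - cdf μ (t+q)) + (ε:ℝ)) :=
        ENNReal.ofReal_le_ofReal (by linarith)
    _ ≤ ENNReal.ofReal (cdf ν t - cdf μ (t+q)) + ENNReal.ofReal (ε:ℝ) :=
        ENNReal.ofReal_add_le
    _ = (ENNReal.ofReal (cdf ν t) - ENNReal.ofReal (cdf μ (t+q))) + ε := by
        rw [ENNReal.ofReal_sub _ (cdf_nonneg μ _), ENNReal.ofReal_coe_nnreal]

lemma ae_cont (q : ℝ) : ∀ᵐ t : ℝ, ContinuousAt (cdf μ) (t + q) := by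
  have hc : {x : ℝ | ¬ContinuousAt (cdf μ) x}.Countable :=
    Monotone.countable_not_continuousAt (monotone_cdf μ)
  have hc2 : {t : ℝ | ¬ContinuousAt (cdf μ) (t + q)}.Countable :=
    hc.preimage (add_left_injective q)
  rw [ae_iff]
  exact hc2.measure_zero volume

lemma slice_lintegral (q t : ℝ) :
    ∫⁻ u in Ioo (0:ℝ) 1, ker q t (Qc μ u, Qc ν u)
      = volume ({u : ℝ | Qc ν u ≤ t ∧ t ≤ Qc μ u - q} ∩ Ioo 0 1)
        + volume ({u : ℝ | Qc μ u ≤ t ∧ t ≤ Qc ν u - q} ∩ Ioo 0 1) := by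
  have hA1 : MeasurableSet {u : ℝ | Qc ν u ≤ t ∧ t ≤ Qc μ u - q} :=
    (measurableSet_le (measurable_Qc ν) measurable_const).inter
      (measurableSet_le measurable_const ((measurable_Qc μ).sub measurable_const))
  have hA2 : MeasurableSet {u : ℝ | Qc μ u ≤ t ∧ t ≤ Qc ν u - q} :=
    (measurableSet_le (measurable_Qc μ) measurable_const).inter
      (measurableSet_le measurable_const ((measurable_Qc ν).sub measurable_const))
  have h1 : ∀ u : ℝ, ker q t (Qc μ u, Qc ν u)
      = {u : ℝ | Qc ν u ≤ t ∧ t ≤ Qc μ u - q}.indicator (1 : ℝ → ℝ≥0∞) u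
        + {u : ℝ | Qc μ u ≤ t ∧ t ≤ Qc ν u - q}.indicator (1 : ℝ → ℝ≥0∞) u := by
    intro u
    simp [ker, Set.indicator_apply]
  simp_rw [h1]
  rw [lintegral_add_left (measurable_one.indicator hA1),
    lintegral_indicator_one hA1, lintegral_indicator_one hA2,
    Measure.restrict_apply hA1, Measure.restrict_apply hA2]

lemma gamma_side {p : ℝ} (hp : 1 ≤ p) :
    ∫⁻ u in Ioo (0:ℝ) 1, ENNReal.ofReal (|Qc μ u - Qc ν u| ^ p)
      ≤ ∫⁻ q, (∫⁻ t, LB μ ν q t) ∂(tau p) := by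
  have hker2 : Measurable (fun w : ℝ × ℝ × ℝ => ker w.2.1 w.2.2 (Qc μ w.1, Qc ν w.1)) :=
    ker_meas.comp ((measurable_snd).prodMk
      (((measurable_Qc μ).comp measurable_fst).prodMk ((measurable_Qc ν).comp measurable_fst)))
  calc ∫⁻ u in Ioo (0:ℝ) 1, ENNReal.ofReal (|Qc μ u - Qc ν u| ^ p)
      = ∫⁻ u in Ioo (0:ℝ) 1, ∫⁻ r, ker r.1 r.2 (Qc μ u, Qc ν u) ∂((tau p).prod volume) :=
        lintegral_congr (fun u => core3 hp (Qc μ u, Qc ν u))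
    _ = ∫⁻ r, (∫⁻ u in Ioo (0:ℝ) 1, ker r.1 r.2 (Qc μ u, Qc ν u)) ∂((tau p).prod volume) := by
        rw [lintegral_lintegral_swap
          (f := fun (u : ℝ) (r : ℝ × ℝ) => ker r.1 r.2 (Qc μ u, Qc ν u)) hker2.aemeasurable]
    _ = ∫⁻ q, (∫⁻ t, ∫⁻ u in Ioo (0:ℝ) 1, ker q t (Qc μ u, Qc ν u)) ∂(tau p) := by
        rw [lintegral_prod _ ?_]
        apply Measurable.aemeasurable
        apply Measurable.lintegral_prod_right'
          (f := fun (w : (ℝ × ℝ) × ℝ) => ker w.1.1 w.1.2 (Qc μ w.2, Qc ν w.2))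
        exact ker_meas.comp ((measurable_fst).prodMk
          (((measurable_Qc μ).comp measurable_snd).prodMk ((measurable_Qc ν).comp measurable_snd)))
    _ ≤ ∫⁻ q, (∫⁻ t, LB μ ν q t) ∂(tau p) := by
        refine lintegral_mono_ae ?_
        filter_upwards [tau_nonneg p] with q hq
        refine lintegral_mono_ae ?_
        filter_upwards [ae_cont μ q, ae_cont ν q] with t hFt hGt
        rw [slice_lintegral]
        exact add_le_add (one_slice μ ν hq hFt) (one_slice ν μ hq hGt)



lemma measurable_abs_rpow {p : ℝ} (hp : 1 ≤ p) : Measurable (fun x : ℝ => |x| ^ p) :=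
  ((Real.continuous_rpow_const (by linarith)).comp continuous_abs).measurable

lemma abs_rpow_bound {p x y : ℝ} (hp : 1 ≤ p) :
    |x - y| ^ p ≤ 2 ^ p * (|x| ^ p + |y| ^ p) := by
  have hp0 : (0:ℝ) ≤ p := by linarith
  have h1 : |x - y| ≤ |x| + |y| := abs_sub x y
  have h2 : |x - y| ^ p ≤ (|x| + |y|) ^ p :=
    Real.rpow_le_rpow (abs_nonneg _) h1 hp0
  refine le_trans h2 ?_
  have h3 : |x| + |y| ≤ 2 * max |x| |y| := by
    have := le_max_left |x| |y|
    have := le_max_right |x| |y|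
    linarith
  have h4 : (|x| + |y|) ^ p ≤ (2 * max |x| |y|) ^ p :=
    Real.rpow_le_rpow (by positivity) h3 hp0
  refine le_trans h4 ?_
  rw [Real.mul_rpow (by norm_num) (le_max_of_le_left (abs_nonneg _))]
  have h5 : max |x| |y| ^ p ≤ |x| ^ p + |y| ^ p := by
    rcases le_total |x| |y| with h | h
    · rw [max_eq_right h]
      exact le_add_of_nonneg_left (Real.rpow_nonneg (abs_nonneg _) _)
    · rw [max_eq_left h]
      exact le_add_of_nonneg_right (Real.rpow_nonneg (abs_nonneg _) _)
  have h6 : (0:ℝ) ≤ 2 ^ p := Real.rpow_nonneg (by norm_num) _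
  nlinarith

lemma lint_rpow_ne_top {p : ℝ} (hμ : Integrable (fun x => |x| ^ p) μ) :
    ∫⁻ x, ENNReal.ofReal (|x| ^ p) ∂μ ≠ ⊤ := by
  have h := hμ.hasFiniteIntegral
  rw [HasFiniteIntegral] at h
  refine ne_of_lt (lt_of_eq_of_lt ?_ h)
  apply lintegral_congr (fun x => ?_)
  rw [← Real.enorm_eq_ofReal (Real.rpow_nonneg (abs_nonneg _) _)]

lemma pi_fin {p : ℝ} (hp : 1 ≤ p) {π : Measure (ℝ × ℝ)} (hfst : π.map Prod.fst = μ)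
    (hsnd : π.map Prod.snd = ν) (hμ : Integrable (fun x => |x| ^ p) μ)
    (hν : Integrable (fun x => |x| ^ p) ν) :
    ∫⁻ z, ENNReal.ofReal (|z.1 - z.2| ^ p) ∂π ≠ ⊤ := by
  have hmono : ∫⁻ z, ENNReal.ofReal (|z.1 - z.2| ^ p) ∂π
      ≤ ∫⁻ z : ℝ × ℝ, ENNReal.ofReal (2 ^ p) *
        (ENNReal.ofReal (|z.1| ^ p) + ENNReal.ofReal (|z.2| ^ p)) ∂π := by
    apply lintegral_mono (fun z => ?_)
    rw [← ENNReal.ofReal_add (Real.rpow_nonneg (abs_nonneg _) _)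
      (Real.rpow_nonneg (abs_nonneg _) _),
      ← ENNReal.ofReal_mul (Real.rpow_nonneg (by norm_num) _)]
    exact ENNReal.ofReal_le_ofReal (abs_rpow_bound hp)
  apply ne_of_lt
  refine lt_of_le_of_lt hmono ?_
  have hmeas1 : Measurable (fun z : ℝ × ℝ => ENNReal.ofReal (|z.1| ^ p)) :=
    ((measurable_abs_rpow hp).comp measurable_fst).ennreal_ofReal
  have hmeas2 : Measurable (fun z : ℝ × ℝ => ENNReal.ofReal (|z.2| ^ p)) :=
    ((measurable_abs_rpow hp).comp measurable_snd).ennreal_ofReal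
  rw [lintegral_const_mul _ (hmeas1.fun_add hmeas2), lintegral_add_left hmeas1]
  have e1 : ∫⁻ z : ℝ × ℝ, ENNReal.ofReal (|z.1| ^ p) ∂π = ∫⁻ x, ENNReal.ofReal (|x| ^ p) ∂μ := by
    rw [← hfst, lintegral_map ((measurable_abs_rpow hp).ennreal_ofReal)
      measurable_fst]
  have e2 : ∫⁻ z : ℝ × ℝ, ENNReal.ofReal (|z.2| ^ p) ∂π = ∫⁻ x, ENNReal.ofReal (|x| ^ p) ∂ν := by
    rw [← hsnd, lintegral_map ((measurable_abs_rpow hp).ennreal_ofReal)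
      measurable_snd]
  rw [e1, e2]
  exact ENNReal.mul_lt_top ENNReal.ofReal_lt_top
    (ENNReal.add_lt_top.2 ⟨lt_top_iff_ne_top.2 (lint_rpow_ne_top μ hμ),
      lt_top_iff_ne_top.2 (lint_rpow_ne_top ν hν)⟩)


end WassAux

open Set ENNReal WassAux ProbabilityTheory

theorem wassersteinP_eq_integral_quantile (p : ℝ) (hp : 1 ≤ p)
    (μ ν : Measure ℝ) [IsProbabilityMeasure μ] [IsProbabilityMeasure ν]
    (hμ : Integrable (fun x => |x| ^ p) μ) (hν : Integrable (fun x => |x| ^ p) ν) :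
    wassersteinP p μ ν
      = (∫ u in Set.Ioo (0:ℝ) 1, |quantileFn μ u - quantileFn ν u| ^ p) ^ (1 / p) := by
  have hp0 : (0:ℝ) < p := lt_of_lt_of_le zero_lt_one hp
  have hpair : Measurable (fun u : ℝ => (Qc μ u, Qc ν u)) :=
    (measurable_Qc μ).prodMk (measurable_Qc ν)
  have hint_meas : Measurable (fun z : ℝ × ℝ => |z.1 - z.2| ^ p) :=
    (measurable_abs_rpow hp).comp (measurable_fst.sub measurable_snd)
  have hQ_meas : Measurable (fun u : ℝ => |Qc μ u - Qc ν u| ^ p) :=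
    (measurable_abs_rpow hp).comp ((measurable_Qc μ).sub (measurable_Qc ν))
  set γ : Measure (ℝ × ℝ) := (volume.restrict (Ioo (0:ℝ) 1)).map (fun u => (Qc μ u, Qc ν u))
    with hγdef
  have hγ1 : γ.map Prod.fst = μ := by
    rw [hγdef, Measure.map_map measurable_fst hpair]
    exact map_Qc μ
  have hγ2 : γ.map Prod.snd = ν := by
    rw [hγdef, Measure.map_map measurable_snd hpair]
    exact map_Qc ν
  have hγint : ∫ z : ℝ × ℝ, |z.1 - z.2| ^ p ∂γ
      = ∫ u in Ioo (0:ℝ) 1, |Qc μ u - Qc ν u| ^ p := by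
    rw [hγdef, integral_map hpair.aemeasurable hint_meas.aestronglyMeasurable]
  have hQint : ∫ u in Ioo (0:ℝ) 1, |quantileFn μ u - quantileFn ν u| ^ p
      = ∫ u in Ioo (0:ℝ) 1, |Qc μ u - Qc ν u| ^ p := by
    apply setIntegral_congr_fun measurableSet_Ioo
    intro u hu
    simp only [Qc_eqOn μ u hu, Qc_eqOn ν u hu]
  have hmem : (∫ u in Set.Ioo (0:ℝ) 1, |quantileFn μ u - quantileFn ν u| ^ p) ^ (1 / p)
      ∈ { c | ∃ π : Measure (ℝ × ℝ), π.map Prod.fst = μ ∧ π.map Prod.snd = ν ∧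
        c = (∫ q, |q.1 - q.2| ^ p ∂π) ^ (1 / p) } := by
    refine ⟨γ, hγ1, hγ2, ?_⟩
    rw [hγint, hQint]
  have hbdd : BddBelow { c | ∃ π : Measure (ℝ × ℝ), π.map Prod.fst = μ ∧ π.map Prod.snd = ν ∧
      c = (∫ q, |q.1 - q.2| ^ p ∂π) ^ (1 / p) } := by
    refine ⟨0, ?_⟩
    rintro c ⟨π, h1, h2, rfl⟩
    exact Real.rpow_nonneg
      (integral_nonneg (fun z => Real.rpow_nonneg (abs_nonneg _) _)) _
  have hlb : ∀ c ∈ { c | ∃ π : Measure (ℝ × ℝ), π.map Prod.fst = μ ∧ π.map Prod.snd = ν ∧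
      c = (∫ q, |q.1 - q.2| ^ p ∂π) ^ (1 / p) },
      (∫ u in Set.Ioo (0:ℝ) 1, |quantileFn μ u - quantileFn ν u| ^ p) ^ (1 / p) ≤ c := by
    rintro c ⟨π, h1, h2, rfl⟩
    have key : ∫ u in Ioo (0:ℝ) 1, |Qc μ u - Qc ν u| ^ p
        ≤ ∫ z : ℝ × ℝ, |z.1 - z.2| ^ p ∂π := by
      rw [integral_eq_lintegral_of_nonneg_ae
        (ae_of_all _ (fun z => Real.rpow_nonneg (abs_nonneg _) _))
        hint_meas.aestronglyMeasurable,
        integral_eq_lintegral_of_nonneg_ae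
        (ae_of_all _ (fun u => Real.rpow_nonneg (abs_nonneg _) _))
        hQ_meas.aestronglyMeasurable]
      apply ENNReal.toReal_mono (pi_fin μ ν hp h1 h2 hμ hν)
      exact le_trans (gamma_side μ ν hp) (pi_side μ ν hp h1 h2)
    rw [hQint]
    exact Real.rpow_le_rpow
      (integral_nonneg (fun u => Real.rpow_nonneg (abs_nonneg _) _)) key (by positivity)
  rw [wassersteinP]
  exact le_antisymm (csInf_le hbdd hmem) (le_csInf ⟨_, hmem⟩ hlb)
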